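/- In the proof that ℚ × ℝ is not T-locally compact: let N = ((0,1) × (0,1)) ∩ (ℚ × ℝ) viewed as a subset of the product space ℚ × ℝ. Then for every nonempty open subset U of ℚ × ℝ with U ⊆ N, the frontier of U (taken in ℚ × ℝ) is not compact. -/
import Mathlib


def TLocallyCompact (X : Type*) [TopologicalSpace X] : Prop :=
  ∀ (x : X) (U : Set X), IsOpen U → x ∈ U →
    ∃ V : Set X, IsOpen V ∧ x ∈ V ∧ V ⊆ U ∧ IsCompact (frontier V)

theorem frontier_not_compact_in_rat_prod_real
    (N : Set (ℚ × ℝ)) (hN : N = {q : ℚ × ℝ | (q.1 : ℝ) ∈ Set.Ioo (0 : ℝ) 1 ∧ q.2 ∈ Set.Ioo (0 : ℝ) 1})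
    (U : Set (ℚ × ℝ)) (hU : IsOpen U) (hne : U.Nonempty) (hUN : U ⊆ N) :
    ¬ IsCompact (frontier U) := by
  intro hF
  obtain ⟨⟨q₀, r₀⟩, hp⟩ := hne
  obtain ⟨ε, hε, hball⟩ := Metric.isOpen_iff.mp hU _ hp
  set K : Set ℝ := (fun p : ℚ × ℝ => (p.1 : ℝ)) '' frontier U with hK
  have hKc : IsCompact K := hF.image (by continuity)
  have hKclosed : IsClosed K := hKc.isClosed
  obtain ⟨α, hαirr, hα1, hα2⟩ :=
    exists_irrational_btwn (show (q₀ : ℝ) < (q₀ : ℝ) + ε by linarith)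
  have hαK : α ∉ K := by
    rintro ⟨⟨q, r⟩, -, rfl⟩
    exact hαirr ⟨q, rfl⟩
  obtain ⟨δ, hδ, hδball⟩ := Metric.isOpen_iff.mp hKclosed.isOpen_compl α hαK
  obtain ⟨q, hq1, hq2⟩ :=
    exists_rat_btwn (show max (α - δ) (q₀ : ℝ) < α from max_lt (by linarith) hα1)
  have hqgt : (q₀ : ℝ) < (q : ℝ) := lt_of_le_of_lt (le_max_right _ _) hq1
  have hqgt' : α - δ < (q : ℝ) := lt_of_le_of_lt (le_max_left _ _) hq1
  -- the vertical slice of U at q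
  set S : Set ℝ := (fun r : ℝ => ((q : ℚ), r)) ⁻¹' U with hS
  have hcont : Continuous (fun r : ℝ => ((q : ℚ), r)) := continuous_const.prodMk continuous_id
  have hSopen : IsOpen S := hU.preimage hcont
  have hr₀S : r₀ ∈ S := by
    apply hball
    rw [Metric.mem_ball, Prod.dist_eq]
    have h1 : dist q q₀ < ε := by
      rw [← Rat.dist_cast, Real.dist_eq, abs_lt]
      constructor <;> linarith
    have h2 : dist r₀ r₀ = 0 := dist_self r₀
    rw [h2]
    exact max_lt h1 hε
  have hSne : S ≠ Set.univ := by
    intro h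
    have : ((q : ℚ), (2 : ℝ)) ∈ U := by rw [← Set.mem_preimage, ← hS, h]; trivial
    have := hUN this
    rw [hN] at this
    exact absurd this.2.2 (by norm_num)
  have hfr : (frontier S).Nonempty := by
    by_contra h
    rw [Set.not_nonempty_iff_eq_empty, ← isClopen_iff_frontier_eq_empty] at h
    rcases isClopen_iff.mp h with h' | h'
    · rw [h'] at hr₀S; exact hr₀S
    · exact hSne h'
  obtain ⟨r, hr⟩ := hfr
  have hrcl : r ∈ closure S := hr.1
  have hrS : r ∉ S := by
    intro h
    exact hr.2 (by rwa [hSopen.interior_eq])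
  have hmem : ((q : ℚ), r) ∈ frontier U := by
    constructor
    · exact hcont.closure_preimage_subset U hrcl
    · rw [hU.interior_eq]; exact hrS
  have : (q : ℝ) ∈ K := ⟨_, hmem, rfl⟩
  have : (q : ℝ) ∈ Metric.ball α δ := by
    rw [Metric.mem_ball, Real.dist_eq, abs_lt]
    constructor <;> linarith
  exact hδball this ‹(q : ℝ) ∈ K›
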